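/- The set E = ⋂_{t ≥ 0} F(t,·)''K is nonempty and compact; E equals the limit set ⋂_{τ ≥ 0} closure({F(t, y) : y ∈ K, t ≥ τ}); E is invariant (F(t,·)''E = E for all t ≥ 0); and every invariant subset D ⊆ K satisfies D ⊆ E (E is the largest invariant subset of K). -/

import Mathlib

/-- For a nonexpansive semiflow `F` on a nonempty compact set `K`, the set
`E = ⋂_{t ≥ 0} F(t,·)''K` is nonempty and compact; it equals the limit set
`⋂_{τ ≥ 0} closure {F(t,y) : y ∈ K, t ≥ τ}`; it is invariant; and it is the largest
invariant subset of `K`. -/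
theorem stmt_8
    {M : Type*} [MetricSpace M]
    (K : Set M) (hK_ne : K.Nonempty) (hK_cpt : IsCompact K)
    (F : ℝ → M → M)
    (hF0 : ∀ y ∈ K, F 0 y = y)
    (hFadd : ∀ s t : ℝ, 0 ≤ s → 0 ≤ t → ∀ y ∈ K, F (s + t) y = F s (F t y))
    (hFK : ∀ t : ℝ, 0 ≤ t → ∀ y ∈ K, F t y ∈ K)
    (hFne : ∀ t : ℝ, 0 ≤ t → ∀ y₁ ∈ K, ∀ y₂ ∈ K, dist (F t y₁) (F t y₂) ≤ dist y₁ y₂)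
    (E : Set M) (hE : E = ⋂ t ∈ Set.Ici (0 : ℝ), F t '' K) :
    E.Nonempty ∧ IsCompact E ∧
    (E = ⋂ τ ∈ Set.Ici (0 : ℝ), closure {z : M | ∃ y ∈ K, ∃ t : ℝ, τ ≤ t ∧ z = F t y}) ∧
    (∀ t : ℝ, 0 ≤ t → F t '' E = E) ∧
    (∀ D : Set M, D ⊆ K → (∀ t : ℝ, 0 ≤ t → F t '' D = D) → D ⊆ E) := by
  -- continuity of each time map on K
  have hcont : ∀ t : ℝ, 0 ≤ t → ContinuousOn (F t) K := by
    intro t ht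
    refine LipschitzOnWith.continuousOn (K := 1) ?_
    refine LipschitzOnWith.of_dist_le_mul ?_
    intro y₁ hy₁ y₂ hy₂
    simpa using hFne t ht y₁ hy₁ y₂ hy₂
  have himg : ∀ t : ℝ, 0 ≤ t → IsCompact (F t '' K) :=
    fun t ht => hK_cpt.image_of_continuousOn (hcont t ht)
  have hsubK : ∀ t : ℝ, 0 ≤ t → F t '' K ⊆ K := by
    rintro t ht _ ⟨y, hy, rfl⟩; exact hFK t ht y hy
  have hmono : ∀ s t : ℝ, 0 ≤ s → s ≤ t → F t '' K ⊆ F s '' K := by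
    rintro s t hs hst _ ⟨y, hy, rfl⟩
    refine ⟨F (t - s) y, hFK _ (by linarith) y hy, ?_⟩
    have := hFadd s (t - s) hs (by linarith) y hy
    rw [show s + (t - s) = t by ring] at this
    exact this.symm
  -- membership in E
  have hmemE : ∀ x : M, x ∈ E ↔ ∀ t : ℝ, 0 ≤ t → x ∈ F t '' K := by
    intro x; rw [hE]; simp [Set.mem_iInter₂]
  have hEK : E ⊆ K := by
    intro x hx
    have := (hmemE x).1 hx 0 le_rfl
    exact hsubK 0 le_rfl this
  -- Nonempty via directed family of compacts
  have hne : E.Nonempty := by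
    have key : (⋂ i : {t : ℝ // 0 ≤ t}, F i.1 '' K).Nonempty := by
      refine IsCompact.nonempty_iInter_of_directed_nonempty_isCompact_isClosed
        (fun i : {t : ℝ // 0 ≤ t} => F i.1 '' K) ?_ (fun i => hK_ne.image _)
        (fun i => himg i.1 i.2) (fun i => (himg i.1 i.2).isClosed)
      intro i j
      exact ⟨⟨max i.1 j.1, le_max_of_le_left i.2⟩,
        hmono i.1 _ i.2 (le_max_left _ _), hmono j.1 _ j.2 (le_max_right _ _)⟩
    obtain ⟨x, hx⟩ := key
    refine ⟨x, (hmemE x).2 fun t ht => ?_⟩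
    simpa using Set.mem_iInter.1 hx ⟨t, ht⟩
  -- compactness
  have hEclosed : IsClosed E := by
    rw [hE]
    exact isClosed_biInter fun t ht => (himg t ht).isClosed
  have hcpt : IsCompact E := hK_cpt.of_isClosed_subset hEclosed hEK
  -- limit set description
  have hlimit : E = ⋂ τ ∈ Set.Ici (0 : ℝ),
      closure {z : M | ∃ y ∈ K, ∃ t : ℝ, τ ≤ t ∧ z = F t y} := by
    have hset : ∀ τ : ℝ, 0 ≤ τ →
        {z : M | ∃ y ∈ K, ∃ t : ℝ, τ ≤ t ∧ z = F t y} = F τ '' K := by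
      intro τ hτ
      ext z
      constructor
      · rintro ⟨y, hy, t, hτt, rfl⟩
        exact hmono τ t hτ hτt ⟨y, hy, rfl⟩
      · rintro ⟨y, hy, rfl⟩
        exact ⟨y, hy, τ, le_rfl, rfl⟩
    rw [hE]
    refine Set.iInter₂_congr fun τ hτ => ?_
    rw [hset τ hτ, (himg τ hτ).isClosed.closure_eq]
  -- invariance
  have hinv : ∀ t : ℝ, 0 ≤ t → F t '' E = E := by
    intro t ht
    apply Set.eq_of_subset_of_subset
    · rintro _ ⟨x, hx, rfl⟩
      refine (hmemE _).2 fun s hs => ?_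
      obtain ⟨y, hy, rfl⟩ := (hmemE x).1 hx s hs
      have h1 : F (t + s) y = F t (F s y) := hFadd t s ht hs y hy
      have h2 : F (s + t) y = F s (F t y) := hFadd s t hs ht y hy
      rw [← h1, add_comm, h2]
      exact ⟨F t y, hFK t ht y hy, rfl⟩
    · intro x hx
      -- find z ∈ E with F t z = x
      have hCcl : IsClosed (K ∩ F t ⁻¹' {x}) :=
        (hcont t ht).preimage_isClosed_of_isClosed hK_cpt.isClosed isClosed_singleton
      set Z : {s : ℝ // 0 ≤ s} → Set M :=
        fun i => (F i.1 '' K) ∩ (K ∩ F t ⁻¹' {x}) with hZ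
      have hZne : ∀ i, (Z i).Nonempty := by
        rintro ⟨s, hs⟩
        obtain ⟨y, hy, hxy⟩ := (hmemE x).1 hx (t + s) (by linarith)
        refine ⟨F s y, ⟨y, hy, rfl⟩, hFK s hs y hy, ?_⟩
        have h1 : F (t + s) y = F t (F s y) := hFadd t s ht hs y hy
        simp only [Set.mem_preimage, Set.mem_singleton_iff]
        rw [← h1, hxy]
      have hZcpt : ∀ i, IsCompact (Z i) := fun i => (himg i.1 i.2).inter_right hCcl
      have key : (⋂ i, Z i).Nonempty := by
        refine IsCompact.nonempty_iInter_of_directed_nonempty_isCompact_isClosed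
          Z ?_ hZne hZcpt (fun i => (hZcpt i).isClosed)
        intro i j
        refine ⟨⟨max i.1 j.1, le_max_of_le_left i.2⟩, ?_, ?_⟩
        · exact Set.inter_subset_inter_left _ (hmono i.1 _ i.2 (le_max_left _ _))
        · exact Set.inter_subset_inter_left _ (hmono j.1 _ j.2 (le_max_right _ _))
      obtain ⟨z, hz⟩ := key
      have hz' : ∀ i : {s : ℝ // 0 ≤ s}, z ∈ Z i := Set.mem_iInter.1 hz
      have hzE : z ∈ E := (hmemE z).2 fun s hs => (hz' ⟨s, hs⟩).1
      have hzx : F t z = x := (hz' ⟨0, le_rfl⟩).2.2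
      exact ⟨z, hzE, hzx⟩
  -- largest invariant subset
  refine ⟨hne, hcpt, hlimit, hinv, ?_⟩
  intro D hDK hDinv x hx
  refine (hmemE x).2 fun t ht => ?_
  rw [← hDinv t ht] at hx
  exact Set.image_mono (f := F t) hDK hx
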